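/- Let 𝓡 be a reaction network on d species and suppose R = (y*_1 → y*_2, …, y*_M → y*_1) is a strong tier-1 cycle along a tier sequence {x_n}. Let {x̄_n} ⊆ ℤ^d_{≥0} be a sequence with sup_n ‖x_n − x̄_n‖_∞ < ∞ and (x̄_n)_i = (x_n)_i for every n and every i ∉ I_{x_n}. Then there is a subsequence {x̄_{n_k}} of {x̄_n} that is a tier sequence of 𝓡 and along which R is a strong tier-1 cycle. -/

import Mathlib

open Filter Finset

/-- A reaction network on `d` species: every reaction has a nonnegative source complex and
a nonnegative product complex, and the source differs from the product. -/
def IsRN (d : ℕ) (Rn : Finset ((Fin d → ℤ) × (Fin d → ℤ))) : Prop :=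
  ∀ r ∈ Rn, (∀ i, 0 ≤ r.1 i) ∧ (∀ i, 0 ≤ r.2 i) ∧ r.1 ≠ r.2

/-- Mass-action intensity `λ_y(x) = ∏ i, x_i!/(x_i - y_i)!` if `x ≥ y` componentwise, else `0`. -/
def intensity (d : ℕ) (y x : Fin d → ℤ) : ℕ :=
  if ∀ i, y i ≤ x i then ∏ i : Fin d, Nat.descFactorial (x i).toNat ((y i).toNat) else 0

/-- Cyclic successor on `{1, …, M}`: `cyc M m = m + 1` for `m < M` and `cyc M M = 1`. -/
def cyc (M m : ℕ) : ℕ := if m = M then 1 else m + 1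

/-- `xshift d ystar x m n = x^m_n = x_n + ∑_{j=1}^{m-1} (y*_{j+1} - y*_j)`. -/
def xshift (d : ℕ) (ystar : ℕ → Fin d → ℤ) (x : ℕ → Fin d → ℤ) (m n : ℕ) : Fin d → ℤ :=
  fun i => x n i + ∑ j ∈ Finset.Ico 1 m, (ystar (j + 1) i - ystar j i)

/-- The ordered list `(y*_1 → y*_2, …, y*_M → y*_1)` consists of reactions of the network. -/
def IsCycleIn (d : ℕ) (Rn : Finset ((Fin d → ℤ) × (Fin d → ℤ))) (M : ℕ)
    (ystar : ℕ → Fin d → ℤ) : Prop :=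
  ∀ m, 1 ≤ m → m ≤ M → (ystar m, ystar (cyc M m)) ∈ Rn

/-- Condition (ii) of a strong tier-1 cycle, with explicit witness `m0`. -/
def TierLimits (d : ℕ) (Rn : Finset ((Fin d → ℤ) × (Fin d → ℤ))) (M : ℕ)
    (ystar : ℕ → Fin d → ℤ) (x : ℕ → Fin d → ℤ) (m0 : ℕ) : Prop :=
  ∀ m, 1 ≤ m → m ≤ M → ∀ y y' : Fin d → ℤ, (y, y') ∈ Rn →
    (y, y') ≠ (ystar m, ystar (cyc M m)) →
    Tendsto (fun n =>
        ((intensity d (ystar m0) (xshift d ystar x m0 n) : ℝ) *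
          (intensity d y (xshift d ystar x m n) : ℝ)) /
          (intensity d (ystar m) (xshift d ystar x m n) : ℝ))
      atTop (nhds 0)

/-- `R = (y*_1 → y*_2, …, y*_M → y*_1)` is a strong tier-1 cycle along `x`. -/
def IsStrongT1Cycle (d : ℕ) (Rn : Finset ((Fin d → ℤ) × (Fin d → ℤ))) (M : ℕ)
    (ystar : ℕ → Fin d → ℤ) (x : ℕ → Fin d → ℤ) : Prop :=
  IsCycleIn d Rn M ystar ∧
  (∀ n, 0 < intensity d (ystar 1) (x n)) ∧
  ∃ m0, 1 ≤ m0 ∧ m0 ≤ M ∧ TierLimits d Rn M ystar x m0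

/-- `y` is a source complex of the network. -/
def IsSourceIn (d : ℕ) (Rn : Finset ((Fin d → ℤ) × (Fin d → ℤ))) (y : Fin d → ℤ) : Prop :=
  ∃ y', (y, y') ∈ Rn

/-- `y` is a complex (source or product) of the network. -/
def ComplexOf (d : ℕ) (Rn : Finset ((Fin d → ℤ) × (Fin d → ℤ))) (y : Fin d → ℤ) : Prop :=
  ∃ r ∈ Rn, r.1 = y ∨ r.2 = y

/-- Tier sequence of a reaction network. -/
def IsTierSeq (d : ℕ) (Rn : Finset ((Fin d → ℤ) × (Fin d → ℤ)))
    (x : ℕ → Fin d → ℤ) : Prop :=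
  (∀ n i, 0 ≤ x n i) ∧
  (∃ i, Tendsto (fun n => x n i) atTop atTop) ∧
  (∀ i, (Tendsto (fun n => x n i) atTop atTop ∧ Monotone fun n => x n i) ∨
      (∃ c : ℤ, ∀ n, x n i = c)) ∧
  (∀ y y' : Fin d → ℤ, IsSourceIn d Rn y → IsSourceIn d Rn y' →
    (Tendsto (fun n => (intensity d y (x n) : ℝ) / (intensity d y' (x n) : ℝ)) atTop atTop ∨
      ∃ c : ℝ, Tendsto (fun n => (intensity d y (x n) : ℝ) / (intensity d y' (x n) : ℝ))
        atTop (nhds c)))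

/-- One reaction step: some reaction `y → y'` with `y ≤ a` fires, giving `b = a + y' - y`. -/
def ReactStep (d : ℕ) (Rn : Finset ((Fin d → ℤ) × (Fin d → ℤ)))
    (a b : Fin d → ℤ) : Prop :=
  ∃ r ∈ Rn, (∀ i, r.1 i ≤ a i) ∧ b = fun i => a i + (r.2 i - r.1 i)

/-- `w` is reachable from `z` by finitely many reaction steps. -/
def Reachable (d : ℕ) (Rn : Finset ((Fin d → ℤ) × (Fin d → ℤ)))
    (z w : Fin d → ℤ) : Prop :=
  Relation.ReflTransGen (ReactStep d Rn) z w

/-- Weak reversibility: every reaction lies on a directed cycle of reactions. -/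
def WeaklyReversible (d : ℕ) (Rn : Finset ((Fin d → ℤ) × (Fin d → ℤ))) : Prop :=
  ∀ r ∈ Rn, ∃ (K : ℕ) (ys : ℕ → Fin d → ℤ), 2 ≤ K ∧
    ys 1 = r.1 ∧ ys 2 = r.2 ∧
    (∀ j, 1 ≤ j → j < K → (ys j, ys (j + 1)) ∈ Rn) ∧
    (ys K, ys 1) ∈ Rn



lemma pow_le_two_pow_mul_desc (n k : ℕ) (h : 2*k ≤ n) :
    n^k ≤ 2^k * n.descFactorial k := by
  rw [Nat.descFactorial_eq_prod_range]
  calc n^k = ∏ _i ∈ range k, n := by rw [Finset.prod_const, card_range]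
    _ ≤ ∏ i ∈ range k, 2 * (n - i) := by
        apply Finset.prod_le_prod'
        intro i hi
        simp only [mem_range] at hi
        omega
    _ = 2^k * ∏ i ∈ range k, (n - i) := by
        rw [Finset.prod_mul_distrib, Finset.prod_const, card_range]

lemma desc_compare (n n' k B : ℕ) (h1 : n' ≤ n + B) (h2 : B ≤ n) (h3 : 2*k ≤ n) :
    n'.descFactorial k ≤ 4^k * n.descFactorial k := by
  calc n'.descFactorial k ≤ n'^k := Nat.descFactorial_le_pow _ _
    _ ≤ (2*n)^k := Nat.pow_le_pow_left (by omega) k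
    _ = 2^k * n^k := by rw [mul_pow]
    _ ≤ 2^k * (2^k * n.descFactorial k) :=
        Nat.mul_le_mul_left _ (pow_le_two_pow_mul_desc n k h3)
    _ = 4^k * n.descFactorial k := by rw [← mul_assoc, ← mul_pow]; norm_num

lemma intensity_pos_iff (d : ℕ) (y x : Fin d → ℤ) :
    0 < intensity d y x ↔ ∀ i, y i ≤ x i := by
  constructor
  · intro h
    by_contra hc
    simp [intensity, hc] at h
  · intro h
    unfold intensity
    rw [if_pos h]
    apply Finset.prod_pos
    intro i _
    have h1 := Int.toNat_le_toNat (h i)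
    have h2 := Nat.descFactorial_eq_zero_iff_lt (n := (x i).toNat) (k := (y i).toNat)
    omega

lemma intensity_compare (d : ℕ) (y a b : Fin d → ℤ) (Bn : ℕ)
    (h : ∀ i, a i = b i ∨ (y i ≤ a i ∧ y i ≤ b i ∧ (b i).toNat ≤ (a i).toNat + Bn ∧
      Bn ≤ (a i).toNat ∧ 2*(y i).toNat ≤ (a i).toNat)) :
    intensity d y b ≤ (∏ i : Fin d, 4^((y i).toNat)) * intensity d y a := by
  unfold intensity
  by_cases hb : ∀ i, y i ≤ b i
  · have ha : ∀ i, y i ≤ a i := by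
      intro i; rcases h i with h' | h'
      · rw [h']; exact hb i
      · exact h'.1
    rw [if_pos hb, if_pos ha, ← Finset.prod_mul_distrib]
    apply Finset.prod_le_prod'
    intro i _
    rcases h i with h' | h'
    · rw [h']
      exact Nat.le_mul_of_pos_left _ (Nat.pow_pos (by norm_num))
    · exact desc_compare _ _ _ Bn h'.2.2.1 h'.2.2.2.1 h'.2.2.2.2
  · rw [if_neg hb]; exact Nat.zero_le _

lemma xshift_eq (d : ℕ) (ystar : ℕ → Fin d → ℤ) (x : ℕ → Fin d → ℤ) (m n : ℕ) (hm : 1 ≤ m) :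
    xshift d ystar x m n = fun i => x n i + (ystar m i - ystar 1 i) := by
  funext i
  unfold xshift
  rw [Finset.sum_Ico_eq_sub _ hm, Finset.sum_range_sub (fun j => ystar j i),
    Finset.sum_range_sub (fun j => ystar j i)]
  ring

/-- Perturbation lemma: a bounded perturbation of a tier sequence (agreeing on the bounded
coordinates) has a subsequence that is again a tier sequence along which `R` is a strong
tier-1 cycle. -/
theorem stmt11 {d M : ℕ} (hd : 1 ≤ d) (hM : 1 ≤ M)
    (Rn : Finset ((Fin d → ℤ) × (Fin d → ℤ))) (hRn : IsRN d Rn)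
    (ystar : ℕ → Fin d → ℤ) (x : ℕ → Fin d → ℤ)
    (htier : IsTierSeq d Rn x)
    (hcycle : IsStrongT1Cycle d Rn M ystar x)
    (xb : ℕ → Fin d → ℤ) (hxb0 : ∀ n i, 0 ≤ xb n i)
    (hbd : ∃ B : ℤ, ∀ n i, |x n i - xb n i| ≤ B)
    (heq : ∀ n i, ¬ Tendsto (fun n => x n i) atTop atTop → xb n i = x n i) :
    ∃ φ : ℕ → ℕ, StrictMono φ ∧
      IsTierSeq d Rn (fun k => xb (φ k)) ∧
      IsStrongT1Cycle d Rn M ystar (fun k => xb (φ k)) := by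

  classical
  obtain ⟨hx0, ⟨i0, hi0⟩, hcoord, _hratio⟩ := htier
  obtain ⟨hcyc, hpos1, m0, hm01, hm0M, hTL⟩ := hcycle
  obtain ⟨B, hB⟩ := hbd
  obtain ⟨Bn, hBndef⟩ : ∃ Bn : ℕ, Bn = B.toNat := ⟨_, rfl⟩
  have hBB : ∀ n i, |x n i - xb n i| ≤ (Bn : ℤ) := by
    intro n i
    have h0 : (0:ℤ) ≤ B := le_trans (abs_nonneg _) (hB n i0)
    have : ((Bn : ℤ)) = B := by rw [hBndef]; exact Int.toNat_of_nonneg h0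
    rw [this]; exact hB n i
  set I : Fin d → Prop := fun i => Tendsto (fun n => x n i) atTop atTop with hIdef
  have hconst : ∀ i, ¬ I i → ∃ c, ∀ n, x n i = c := by
    intro i hIi
    rcases hcoord i with h | h
    · exact absurd h.1 hIi
    · exact h
  have hxbeq : ∀ n i, ¬ I i → xb n i = x n i := fun n i h => heq n i h
  -- complexes and bounds
  set Ys : Finset (Fin d → ℤ) := Rn.image Prod.fst ∪ (Finset.Icc 1 M).image ystar with hYsdef
  have hysmem : ∀ m, 1 ≤ m → m ≤ M → ystar m ∈ Ys := by
    intro m h1 h2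
    apply Finset.mem_union_right
    exact Finset.mem_image.mpr ⟨m, Finset.mem_Icc.mpr ⟨h1, h2⟩, rfl⟩
  have hsrcmem : ∀ y : Fin d → ℤ, IsSourceIn d Rn y → y ∈ Ys := by
    intro y ⟨y', hy⟩
    exact Finset.mem_union_left _ (Finset.mem_image.mpr ⟨(y, y'), hy, rfl⟩)
  have hYsnn : ∀ y ∈ Ys, ∀ i, 0 ≤ y i := by
    intro y hy i
    rw [hYsdef, Finset.mem_union] at hy
    rcases hy with hy | hy
    · obtain ⟨r, hr, hre⟩ := Finset.mem_image.mp hy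
      exact hre ▸ (hRn r hr).1 i
    · obtain ⟨m, hm, hme⟩ := Finset.mem_image.mp hy
      rw [Finset.mem_Icc] at hm
      exact hme ▸ (hRn _ (hcyc m hm.1 hm.2)).1 i
  obtain ⟨maxY, hmaxYdef⟩ : ∃ mY : ℕ, mY = Ys.sup (fun y => Finset.univ.sup (fun i => (y i).toNat)) := ⟨_, rfl⟩
  have hmaxY : ∀ y ∈ Ys, ∀ i, (y i).toNat ≤ maxY := by
    intro y hy i
    rw [hmaxYdef]
    exact le_trans (Finset.le_sup (f := fun i => (y i).toNat) (Finset.mem_univ i))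
      (Finset.le_sup (f := fun y => Finset.univ.sup fun i => (y i).toNat) hy)
  obtain ⟨S, hSdef⟩ : ∃ S : ℕ, S = (Finset.Icc 1 M).sup
      (fun m => Finset.univ.sup (fun i => (ystar m i - ystar 1 i).natAbs)) := ⟨_, rfl⟩
  have hS : ∀ m, 1 ≤ m → m ≤ M → ∀ i, (ystar m i - ystar 1 i).natAbs ≤ S := by
    intro m h1 h2 i
    rw [hSdef]
    exact le_trans (Finset.le_sup (f := fun i => (ystar m i - ystar 1 i).natAbs) (Finset.mem_univ i))
      (Finset.le_sup (f := fun m => Finset.univ.sup fun i => (ystar m i - ystar 1 i).natAbs)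
        (Finset.mem_Icc.mpr ⟨h1, h2⟩))
  clear hmaxYdef hSdef hBndef
  obtain ⟨K, hKdef⟩ : ∃ K : ℤ, K = ((S + Bn + 3*maxY + 1 : ℕ) : ℤ) := ⟨_, rfl⟩
  -- xb tends to infinity on I-coordinates
  have hxbtend : ∀ i, I i → Tendsto (fun n => xb n i) atTop atTop := by
    intro i hIi
    have hmono : ∀ n, x n i + (-(Bn:ℤ)) ≤ xb n i := by
      intro n
      have := hBB n i
      rw [abs_le] at this
      omega
    exact tendsto_atTop_mono hmono (tendsto_atTop_add_const_right atTop (-(Bn:ℤ)) hIi)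
  -- Step A
  have hA : ∀ᶠ n in atTop, ∀ i, I i → K ≤ x n i ∧ K ≤ xb n i := by
    rw [Filter.eventually_all]
    intro i
    by_cases hIi : I i
    · filter_upwards [hIi.eventually_ge_atTop K, (hxbtend i hIi).eventually_ge_atTop K]
        with n h1 h2
      exact fun _ => ⟨h1, h2⟩
    · exact Eventually.of_forall fun n h => absurd h hIi
  obtain ⟨N0, hN0⟩ := eventually_atTop.mp hA
  -- Step B: monotone subsequence
  have hstep : ∀ N : ℕ, ∃ n, N < n ∧ ∀ i, I i → xb N i ≤ xb n i := by
    intro N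
    have h2 : ∀ᶠ n in atTop, ∀ i, I i → xb N i ≤ xb n i := by
      rw [Filter.eventually_all]
      intro i
      by_cases hIi : I i
      · filter_upwards [(hxbtend i hIi).eventually_ge_atTop (xb N i)] with n h _
        exact h
      · exact Eventually.of_forall fun n h => absurd h hIi
    exact ((eventually_gt_atTop N).and h2).exists
  let g : ℕ → ℕ := fun k => Nat.rec N0 (fun _ p => (hstep p).choose) k
  have hg0 : g 0 = N0 := rfl
  have hg1 : ∀ k, g (k+1) = (hstep (g k)).choose := fun k => rfl
  have hgmono : StrictMono g := by
    apply strictMono_nat_of_lt_succ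
    intro k
    rw [hg1]
    exact (hstep (g k)).choose_spec.1
  have hgN0 : ∀ k, N0 ≤ g k := by
    intro k
    calc N0 = g 0 := hg0.symm
      _ ≤ g k := hgmono.monotone (Nat.zero_le k)
  have hgmon2 : ∀ i, I i → Monotone (fun k => xb (g k) i) := by
    intro i hIi
    apply monotone_nat_of_le_succ
    intro k
    rw [hg1]
    exact (hstep (g k)).choose_spec.2 i hIi
  -- Step C: compactness extraction for ratio limits
  set srcs : Finset ((Fin d → ℤ)) := Rn.image Prod.fst with hsrcsdef
  let PT := {p : (Fin d → ℤ) × (Fin d → ℤ) // p ∈ srcs ×ˢ srcs}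
  let F : ℕ → PT → ENNReal := fun n p =>
    ENNReal.ofReal ((intensity d p.1.1 (xb (g n)) : ℝ) / (intensity d p.1.2 (xb (g n)) : ℝ))
  obtain ⟨L, -, φ2, hφ2, hFconv⟩ :=
    IsCompact.tendsto_subseq (isCompact_univ : IsCompact (Set.univ : Set (PT → ENNReal)))
      (fun n => Set.mem_univ (F n))
  have hFcomp : ∀ p : PT, Tendsto (fun k => F (φ2 k) p) atTop (nhds (L p)) := by
    intro p
    exact tendsto_pi_nhds.mp hFconv p
  set φ : ℕ → ℕ := g ∘ φ2 with hφdef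
  have hφ : StrictMono φ := hgmono.comp hφ2
  have hKk : ∀ k i, I i → K ≤ x (φ k) i ∧ K ≤ xb (φ k) i :=
    fun k i hIi => hN0 (φ k) (hgN0 (φ2 k)) i hIi
  have hmon : ∀ i, I i → Monotone (fun k => xb (φ k) i) :=
    fun i hIi => (hgmon2 i hIi).comp hφ2.monotone
  have hxbφtend : ∀ i, I i → Tendsto (fun k => xb (φ k) i) atTop atTop :=
    fun i hIi => (hxbtend i hIi).comp hφ.tendsto_atTop
  refine ⟨φ, hφ, ⟨fun k i => hxb0 _ i, ⟨i0, hxbφtend i0 hi0⟩, ?_, ?_⟩, hcyc, ?_, m0, hm01, hm0M, ?_⟩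
  · -- coordinates monotone or constant
    intro i
    by_cases hIi : I i
    · exact Or.inl ⟨hxbφtend i hIi, hmon i hIi⟩
    · obtain ⟨c, hc⟩ := hconst i hIi
      refine Or.inr ⟨c, fun k => ?_⟩
      show xb (φ k) i = c
      rw [hxbeq _ i hIi]
      exact hc (φ k)
  · -- ratio limits exist
    intro y y' hy hy'
    have hys : y ∈ srcs := hsrcsdef ▸ Finset.mem_image.mpr ⟨(y, hy.choose), hy.choose_spec, rfl⟩
    have hy's : y' ∈ srcs := hsrcsdef ▸ Finset.mem_image.mpr ⟨(y', hy'.choose), hy'.choose_spec, rfl⟩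
    set p : PT := ⟨(y, y'), Finset.mem_product.mpr ⟨hys, hy's⟩⟩ with hpdef
    set r : ℕ → ℝ := fun k => (intensity d y (xb (φ k)) : ℝ) / (intensity d y' (xb (φ k)) : ℝ)
      with hrdef
    have hr0 : ∀ k, 0 ≤ r k := fun k => div_nonneg (Nat.cast_nonneg _) (Nat.cast_nonneg _)
    have hFr : ∀ k, F (φ2 k) p = ENNReal.ofReal (r k) := fun k => rfl
    by_cases hL : L p = ⊤
    · left
      rw [tendsto_atTop]
      intro b
      have h1 : Tendsto (fun k => F (φ2 k) p) atTop (nhds ⊤) := hL ▸ hFcomp p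
      have h2 := ENNReal.tendsto_nhds_top_iff_nnreal.mp h1 (Real.toNNReal b)
      filter_upwards [h2] with k hk
      by_contra hc
      push_neg at hc
      rw [hFr] at hk
      have h3 : ENNReal.ofReal (r k) ≤ ENNReal.ofReal b := ENNReal.ofReal_le_ofReal hc.le
      have h4 : (Real.toNNReal b : ENNReal) = ENNReal.ofReal b := rfl
      rw [h4] at hk
      exact absurd (lt_of_lt_of_le hk h3) (lt_irrefl _)
    · right
      refine ⟨(L p).toReal, ?_⟩
      have h1 := (ENNReal.tendsto_toReal hL).comp (hFcomp p)
      have h2 : ∀ k, (F (φ2 k) p).toReal = r k := by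
        intro k
        rw [hFr, ENNReal.toReal_ofReal (hr0 k)]
      exact Tendsto.congr h2 h1
  · -- positivity of intensity of ystar 1
    intro k
    rw [intensity_pos_iff]
    intro i
    show ystar 1 i ≤ xb (φ k) i
    by_cases hIi : I i
    · have h1 := (hKk k i hIi).2
      have h2 := hmaxY (ystar 1) (hysmem 1 le_rfl hM) i
      have h3 := hYsnn (ystar 1) (hysmem 1 le_rfl hM) i
      omega
    · rw [hxbeq _ i hIi]
      exact (intensity_pos_iff d _ _).mp (hpos1 (φ k)) i
  · -- TierLimits
    intro m hm1 hmM y y' hyy' hne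
    have hlim := hTL m hm1 hmM y y' hyy' hne
    have hlim2 := hlim.comp hφ.tendsto_atTop
    have hymem : y ∈ Ys := hsrcmem y ⟨y', hyy'⟩
    have hm0mem : ystar m0 ∈ Ys := hysmem m0 hm01 hm0M
    have hmmem : ystar m ∈ Ys := hysmem m hm1 hmM
    -- rewrite shifts
    have e0 : ∀ n', xshift d ystar (fun k => xb (φ k)) m0 n'
        = fun i => xb (φ n') i + (ystar m0 i - ystar 1 i) :=
      fun n' => xshift_eq d ystar _ m0 n' hm01
    have e1 : ∀ n', xshift d ystar (fun k => xb (φ k)) m n'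
        = fun i => xb (φ n') i + (ystar m i - ystar 1 i) :=
      fun n' => xshift_eq d ystar _ m n' hm1
    have e2 : ∀ n', xshift d ystar x m0 n' = fun i => x n' i + (ystar m0 i - ystar 1 i) :=
      fun n' => xshift_eq d ystar x m0 n' hm01
    have e3 : ∀ n', xshift d ystar x m n' = fun i => x n' i + (ystar m i - ystar 1 i) :=
      fun n' => xshift_eq d ystar x m n' hm1
    simp only [e0, e1]
    simp only [Function.comp_def, e2, e3] at hlim2
    -- generic comparison
    have hgen : ∀ k, ∀ yy ∈ Ys, ∀ mm, 1 ≤ mm → mm ≤ M →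
        (intensity d yy (fun i => xb (φ k) i + (ystar mm i - ystar 1 i))
          ≤ (∏ i : Fin d, 4^((yy i).toNat)) *
            intensity d yy (fun i => x (φ k) i + (ystar mm i - ystar 1 i))) ∧
        (intensity d yy (fun i => x (φ k) i + (ystar mm i - ystar 1 i))
          ≤ (∏ i : Fin d, 4^((yy i).toNat)) *
            intensity d yy (fun i => xb (φ k) i + (ystar mm i - ystar 1 i))) := by
      intro k yy hyy mm hmm1 hmmM
      have hcond : ∀ swap : Bool, ∀ i : Fin d,
          ((fun i => (if swap then xb else x) (φ k) i + (ystar mm i - ystar 1 i)) i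
            = (fun i => (if swap then x else xb) (φ k) i + (ystar mm i - ystar 1 i)) i) ∨
          (yy i ≤ (fun i => (if swap then xb else x) (φ k) i + (ystar mm i - ystar 1 i)) i ∧
           yy i ≤ (fun i => (if swap then x else xb) (φ k) i + (ystar mm i - ystar 1 i)) i ∧
           ((fun i => (if swap then x else xb) (φ k) i + (ystar mm i - ystar 1 i)) i).toNat
             ≤ ((fun i => (if swap then xb else x) (φ k) i + (ystar mm i - ystar 1 i)) i).toNat + Bn ∧
           Bn ≤ ((fun i => (if swap then xb else x) (φ k) i + (ystar mm i - ystar 1 i)) i).toNat ∧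
           2*(yy i).toNat ≤ ((fun i => (if swap then xb else x) (φ k) i + (ystar mm i - ystar 1 i)) i).toNat) := by
        intro swap i
        by_cases hIi : I i
        · right
          have h1 := (hKk k i hIi).1
          have h2 := (hKk k i hIi).2
          have h3 := hS mm hmm1 hmmM i
          have h4 := hBB (φ k) i
          have h5 := hmaxY yy hyy i
          have h6 := hYsnn yy hyy i
          rw [hKdef] at h1 h2
          rw [abs_le] at h4
          cases swap <;> simp only [if_true, if_false, Bool.false_eq_true] <;>
            exact ⟨by omega, by omega, by omega, by omega, by omega⟩
        · left
          have hE := hxbeq (φ k) i hIi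
          cases swap <;> simp only [if_true, if_false, Bool.false_eq_true] <;> omega
      constructor
      · have := intensity_compare d yy
          (fun i => x (φ k) i + (ystar mm i - ystar 1 i))
          (fun i => xb (φ k) i + (ystar mm i - ystar 1 i)) Bn ?_
        · exact this
        · have h := hcond false
          simpa using h
      · have := intensity_compare d yy
          (fun i => xb (φ k) i + (ystar mm i - ystar 1 i))
          (fun i => x (φ k) i + (ystar mm i - ystar 1 i)) Bn ?_
        · exact this
        · have h := hcond true
          simpa using h
    -- denominators positivity transfer
    have hDpos : ∀ k, 0 < intensity d (ystar m) (fun i => xb (φ k) i + (ystar m i - ystar 1 i)) →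
        0 < intensity d (ystar m) (fun i => x (φ k) i + (ystar m i - ystar 1 i)) := by
      intro k h
      rw [intensity_pos_iff] at h ⊢
      intro i
      by_cases hIi : I i
      · have h1 := (hKk k i hIi).1
        have h3 := hS m hm1 hmM i
        have h5 := hmaxY (ystar m) hmmem i
        have h6 := hYsnn (ystar m) hmmem i
        rw [hKdef] at h1
        omega
      · have := h i
        rw [hxbeq _ i hIi] at this
        exact this
    set c0 : ℕ := ∏ i : Fin d, 4^(((ystar m0) i).toNat) with hc0def
    set c1 : ℕ := ∏ i : Fin d, 4^((y i).toNat) with hc1def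
    set c2 : ℕ := ∏ i : Fin d, 4^(((ystar m) i).toNat) with hc2def
    set C : ℝ := ((c0 * c1 * c2 : ℕ) : ℝ) with hCdef
    have hC0 : 0 ≤ C := Nat.cast_nonneg _
    apply squeeze_zero (g := fun k => C * (((intensity d (ystar m0)
        (fun i => x (φ k) i + (ystar m0 i - ystar 1 i)) : ℝ) *
        (intensity d y (fun i => x (φ k) i + (ystar m i - ystar 1 i)) : ℝ)) /
        (intensity d (ystar m) (fun i => x (φ k) i + (ystar m i - ystar 1 i)) : ℝ)))
    · intro k
      positivity
    · intro k
      set A : ℕ := intensity d (ystar m0) (fun i => x (φ k) i + (ystar m0 i - ystar 1 i)) with hAdef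
      set Ab : ℕ := intensity d (ystar m0) (fun i => xb (φ k) i + (ystar m0 i - ystar 1 i)) with hAbdef
      set Bq : ℕ := intensity d y (fun i => x (φ k) i + (ystar m i - ystar 1 i)) with hBqdef
      set Bb : ℕ := intensity d y (fun i => xb (φ k) i + (ystar m i - ystar 1 i)) with hBbdef
      set D : ℕ := intensity d (ystar m) (fun i => x (φ k) i + (ystar m i - ystar 1 i)) with hDdef
      set Db : ℕ := intensity d (ystar m) (fun i => xb (φ k) i + (ystar m i - ystar 1 i)) with hDbdef
      have hA1 : Ab ≤ c0 * A := (hgen k (ystar m0) hm0mem m0 hm01 hm0M).1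
      have hB1 : Bb ≤ c1 * Bq := (hgen k y hymem m hm1 hmM).1
      have hD1 : D ≤ c2 * Db := (hgen k (ystar m) hmmem m hm1 hmM).2
      rcases Nat.eq_zero_or_pos Db with hDb | hDb
      · rw [hDb]
        simp only [Nat.cast_zero, div_zero]
        positivity
      · have hD : 0 < D := hDpos k hDb
        have hDbR : (0:ℝ) < (Db : ℝ) := by exact_mod_cast hDb
        have hDR : (0:ℝ) < (D : ℝ) := by exact_mod_cast hD
        rw [div_le_iff₀ hDbR]
        have key : ((Ab : ℝ) * Bb) ≤ (c0 * A) * (c1 * Bq) := by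
          have := Nat.mul_le_mul hA1 hB1
          exact_mod_cast this
        calc ((Ab : ℝ) * Bb) ≤ (c0 * A) * (c1 * Bq) := key
          _ = ((c0 : ℝ) * c1) * (A * Bq) := by ring
          _ ≤ ((c0 : ℝ) * c1) * ((A * Bq) * ((c2 * Db) / D)) := by
              apply mul_le_mul_of_nonneg_left _ (by positivity)
              apply le_mul_of_one_le_right (by positivity)
              rw [le_div_iff₀ hDR, one_mul]
              exact_mod_cast hD1
          _ = C * ((A : ℝ) * Bq / D) * Db := by
              rw [hCdef]; push_cast; field_simp
    · have := hlim2.const_mul C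
      simpa using this
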